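/- Let a ∈ ℝ^{2×2} be symmetric of rank one. Define q(ξ) := 2‖aξ‖² − ⟨aξ, ξ⟩² for ξ ∈ ℝ², g := max_{ξ ∈ S¹} q(ξ), and S := {ξ ∈ S¹ : q(ξ) = g}. Then there exists a constant c > 0 such that g − q(ξ) ≥ c·dist(ξ, S)⁴ for all ξ ∈ S¹, but there exists NO constant c > 0 such that g − q(ξ) ≥ c·dist(ξ, S)² for all ξ ∈ S¹. -/

import Mathlib

/-- The multiplier `q(ξ) = 2‖aξ‖² - ⟨aξ, ξ⟩²` for `ξ ∈ ℝ²`. -/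
noncomputable def qcc (a : Matrix (Fin 2) (Fin 2) ℝ) (ξ : EuclideanSpace ℝ (Fin 2)) : ℝ :=
  2 * (∑ i, (∑ j, a i j * ξ j) ^ 2) - (∑ i, ξ i * ∑ j, a i j * ξ j) ^ 2

lemma decomp (a : Matrix (Fin 2) (Fin 2) ℝ) (ha : a.IsSymm) (hrank : a.rank = 1) :
    ∃ (l : ℝ) (v : EuclideanSpace ℝ (Fin 2)), l ≠ 0 ∧ v 0 ^ 2 + v 1 ^ 2 = 1 ∧
      ∀ i j, a i j = l * v i * v j := by
  have hdet : a.det = 0 := by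
    by_contra h
    have : IsUnit a := (Matrix.isUnit_iff_isUnit_det a).2 (isUnit_iff_ne_zero.2 h)
    have := Matrix.rank_of_isUnit a this
    rw [hrank] at this
    simp [Fintype.card_fin] at this
  have hne : a ≠ 0 := by
    intro h0
    rw [h0, Matrix.rank_zero] at hrank
    exact one_ne_zero hrank.symm
  have hsym : a 1 0 = a 0 1 := by
    have := ha.apply 0 1
    simpa using this
  have hdet' : a 0 0 * a 1 1 - a 0 1 * a 1 0 = 0 := by
    rw [Matrix.det_fin_two] at hdet; linarith
  set p := a 0 0 with hp
  set r := a 0 1 with hr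
  set s := a 1 1 with hs
  have hps : p * s = r ^ 2 := by rw [hsym] at hdet'; rw [sq]; linarith
  by_cases hp0 : p = 0
  · have hr0 : r = 0 := by
      have h2 : r ^ 2 = 0 := by rw [← hps, hp0]; ring
      exact pow_eq_zero_iff two_ne_zero |>.1 h2
    have hs0 : s ≠ 0 := by
      intro h
      apply hne
      ext i j
      fin_cases i <;> fin_cases j <;> simp [← hp, ← hr, ← hs, hp0, hr0, h, hsym]
    refine ⟨s, (WithLp.equiv 2 (Fin 2 → ℝ)).symm ![0, 1], hs0, by simp, ?_⟩
    intro i j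
    fin_cases i <;> fin_cases j <;> simp [← hp, ← hr, ← hs, hp0, hr0, hsym]
  · have hn : p ^ 2 + r ^ 2 > 0 := by positivity
    set n := Real.sqrt (p ^ 2 + r ^ 2) with hn'
    have hnpos : 0 < n := Real.sqrt_pos.2 hn
    have hn2 : n ^ 2 = p ^ 2 + r ^ 2 := Real.sq_sqrt hn.le
    refine ⟨(p ^ 2 + r ^ 2) / p, (WithLp.equiv 2 (Fin 2 → ℝ)).symm ![p / n, r / n],
      by positivity, ?_, ?_⟩
    · simp only [WithLp.equiv_symm_apply, PiLp.toLp_apply, Matrix.cons_val_zero,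
        Matrix.cons_val_one, Matrix.head_cons]
      field_simp
      linarith [hn2]
    · intro i j
      fin_cases i <;> fin_cases j <;>
        simp only [WithLp.equiv_symm_apply, PiLp.toLp_apply, Fin.zero_eta, Fin.mk_one, Matrix.cons_val_zero,
          Matrix.cons_val_one, Matrix.head_cons, ← hp, ← hr, ← hs, hsym] <;>
        (have hnn : n * n = p ^ 2 + r ^ 2 := by rw [← sq]; exact hn2) <;>
        field_simp <;>
        first
          | linear_combination p * hnn
          | linear_combination r * hnn
          | linear_combination r * p * hnn
          | linear_combination s * p * hnn + (p ^ 2 + r ^ 2) * hps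
          | linear_combination (1 - s * p) * hnn - (p ^ 2 + r ^ 2) * hps
          | linear_combination hnn

lemma norm_sq2 (ξ : EuclideanSpace ℝ (Fin 2)) : ‖ξ‖ ^ 2 = ξ 0 ^ 2 + ξ 1 ^ 2 := by
  rw [EuclideanSpace.norm_eq, Real.sq_sqrt (by positivity)]
  simp [Fin.sum_univ_two, sq_abs]

lemma norm_one_iff (ξ : EuclideanSpace ℝ (Fin 2)) : ‖ξ‖ = 1 ↔ ξ 0 ^ 2 + ξ 1 ^ 2 = 1 := by
  rw [← norm_sq2]
  constructor
  · intro h; rw [h]; norm_num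
  · intro h
    have := norm_nonneg ξ
    nlinarith

lemma dist_sq2 (ξ η : EuclideanSpace ℝ (Fin 2)) :
    dist ξ η ^ 2 = (ξ 0 - η 0) ^ 2 + (ξ 1 - η 1) ^ 2 := by
  rw [EuclideanSpace.dist_eq, Real.sq_sqrt (by positivity)]
  simp [Fin.sum_univ_two, Real.dist_eq, sq_abs]

lemma qcc_eq (a : Matrix (Fin 2) (Fin 2) ℝ) (l : ℝ) (v : EuclideanSpace ℝ (Fin 2))
    (hv : v 0 ^ 2 + v 1 ^ 2 = 1) (hA : ∀ i j, a i j = l * v i * v j)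
    (ξ : EuclideanSpace ℝ (Fin 2)) :
    qcc a ξ = l ^ 2 * (2 * (v 0 * ξ 0 + v 1 * ξ 1) ^ 2 - (v 0 * ξ 0 + v 1 * ξ 1) ^ 4) := by
  simp only [qcc, Fin.sum_univ_two, hA]
  linear_combination (2 * l ^ 2 * (v 0 * ξ 0 + v 1 * ξ 1) ^ 2) * hv


lemma aux_quartic_pos (l t D : ℝ) (hl2 : 0 < l ^ 2) (ht1 : t ^ 2 ≤ 1) (htpos : 0 ≤ t)
    (h4 : D ^ 4 ≤ (2 - 2 * t) ^ 2) :
    l ^ 2 / 4 * D ^ 4 ≤ l ^ 2 * (1 - t ^ 2) ^ 2 := by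
  nlinarith [mul_nonneg (mul_nonneg hl2.le (sq_nonneg (1 - t)))
    (by nlinarith : (0:ℝ) ≤ t ^ 2 + 2 * t)]

lemma aux_quartic_neg (l t D : ℝ) (hl2 : 0 < l ^ 2) (ht1 : t ^ 2 ≤ 1) (htneg : t ≤ 0)
    (h4 : D ^ 4 ≤ (2 + 2 * t) ^ 2) :
    l ^ 2 / 4 * D ^ 4 ≤ l ^ 2 * (1 - t ^ 2) ^ 2 := by
  nlinarith [mul_nonneg (mul_nonneg hl2.le (sq_nonneg (1 + t)))
    (by nlinarith : (0:ℝ) ≤ t ^ 2 - 2 * t)]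

lemma aux_contra (l c δ : ℝ) (hl2 : 0 < l ^ 2) (hc : 0 < c) (hδ0 : 0 < δ)
    (hδh : δ ≤ 1/2) (hδc : δ ≤ c / (8 * l ^ 2))
    (hc2 : c * (2 - 2 * (1 - δ)) ≤ l ^ 2 * (δ * (2 - δ)) ^ 2) : False := by
  have hkey : c * (2 * δ) ≤ 4 * l ^ 2 * δ ^ 2 := by
    nlinarith [mul_nonneg (mul_nonneg hl2.le (sq_nonneg δ))
      (by nlinarith : (0:ℝ) ≤ 4 - (2 - δ) ^ 2)]
  have hcle : c ≤ 2 * l ^ 2 * δ := by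
    by_contra hcon
    push_neg at hcon
    nlinarith [mul_lt_mul_of_pos_right hcon (by linarith : (0:ℝ) < 2 * δ)]
  have hfin : 2 * l ^ 2 * (c / (8 * l ^ 2)) = c / 4 := by
    have : l ^ 2 ≠ 0 := ne_of_gt hl2
    have hl0 : l ≠ 0 := by rintro rfl; simp at hl2
    field_simp
    ring
  have h2 : 2 * l ^ 2 * δ ≤ c / 4 := by
    rw [← hfin]
    exact mul_le_mul_of_nonneg_left hδc (by positivity)
  linarith

/-- For a symmetric rank-one `2×2` matrix `a`, with `S` the set of maximizers of `q` on the
unit circle, one has `g - q(ξ) ≥ c·dist(ξ,S)⁴` for some `c > 0`, but no quadratic lower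
bound holds: the maximal vanishing order is two. -/
theorem statement16 (a : Matrix (Fin 2) (Fin 2) ℝ) (ha : a.IsSymm) (hrank : a.rank = 1) :
    ∃ g : ℝ,
      IsGreatest {y : ℝ | ∃ ξ : EuclideanSpace ℝ (Fin 2), ‖ξ‖ = 1 ∧ y = qcc a ξ} g ∧
      (∃ c : ℝ, 0 < c ∧ ∀ ξ : EuclideanSpace ℝ (Fin 2), ‖ξ‖ = 1 →
        c * (Metric.infDist ξ {η : EuclideanSpace ℝ (Fin 2) | ‖η‖ = 1 ∧ qcc a η = g}) ^ 4 ≤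
          g - qcc a ξ) ∧
      ¬ (∃ c : ℝ, 0 < c ∧ ∀ ξ : EuclideanSpace ℝ (Fin 2), ‖ξ‖ = 1 →
        c * (Metric.infDist ξ {η : EuclideanSpace ℝ (Fin 2) | ‖η‖ = 1 ∧ qcc a η = g}) ^ 2 ≤
          g - qcc a ξ) := by
  obtain ⟨l, v, hl, hv, hA⟩ := decomp a ha hrank
  have hl2 : (0:ℝ) < l ^ 2 := by positivity
  have hq := qcc_eq a l v hv hA
  set S : Set (EuclideanSpace ℝ (Fin 2)) :=
    {η : EuclideanSpace ℝ (Fin 2) | ‖η‖ = 1 ∧ qcc a η = l ^ 2} with hSdef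
  have hvn : ‖v‖ = 1 := (norm_one_iff v).2 hv
  have hqv : qcc a v = l ^ 2 := by
    rw [hq v, show v 0 * v 0 + v 1 * v 1 = (1:ℝ) by linear_combination hv]
    norm_num
  have hwn : ‖(-v : EuclideanSpace ℝ (Fin 2))‖ = 1 := by rwa [norm_neg]
  have hwcoord : ∀ i, (-v : EuclideanSpace ℝ (Fin 2)) i = -(v i) := fun i => rfl
  have hqw : qcc a (-v) = l ^ 2 := by
    rw [hq (-v), hwcoord 0, hwcoord 1,
      show v 0 * -v 0 + v 1 * -v 1 = (-1:ℝ) by linear_combination -hv]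
    norm_num
  have hvS : v ∈ S := ⟨hvn, hqv⟩
  have hwS : (-v : EuclideanSpace ℝ (Fin 2)) ∈ S := ⟨hwn, hqw⟩
  -- distances to ±v
  have hdv : ∀ ξ : EuclideanSpace ℝ (Fin 2), ‖ξ‖ = 1 →
      dist ξ v ^ 2 = 2 - 2 * (v 0 * ξ 0 + v 1 * ξ 1) := by
    intro ξ hξ
    have hξ' := (norm_one_iff ξ).1 hξ
    rw [dist_sq2]
    linear_combination hξ' + hv
  have hdw : ∀ ξ : EuclideanSpace ℝ (Fin 2), ‖ξ‖ = 1 →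
      dist ξ (-v) ^ 2 = 2 + 2 * (v 0 * ξ 0 + v 1 * ξ 1) := by
    intro ξ hξ
    have hξ' := (norm_one_iff ξ).1 hξ
    rw [dist_sq2, hwcoord 0, hwcoord 1]
    linear_combination hξ' + hv
  refine ⟨l ^ 2, ⟨⟨v, hvn, hqv.symm⟩, ?_⟩, ⟨l ^ 2 / 4, by positivity, ?_⟩, ?_⟩
  · -- upper bound
    rintro y ⟨ξ, hξ, rfl⟩
    rw [hq ξ]
    set t := v 0 * ξ 0 + v 1 * ξ 1
    nlinarith [sq_nonneg (1 - t ^ 2), hl2]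
  · -- quartic lower bound
    intro ξ hξ
    have hξ' := (norm_one_iff ξ).1 hξ
    set t := v 0 * ξ 0 + v 1 * ξ 1 with htdef
    have hlag : t ^ 2 + (v 0 * ξ 1 - v 1 * ξ 0) ^ 2 = 1 := by
      rw [htdef]; linear_combination (ξ 0 ^ 2 + ξ 1 ^ 2) * hv + hξ'
    have ht1 : t ^ 2 ≤ 1 := by nlinarith [hlag, sq_nonneg (v 0 * ξ 1 - v 1 * ξ 0)]
    have hqξ : l ^ 2 - qcc a ξ = l ^ 2 * (1 - t ^ 2) ^ 2 := by rw [hq ξ]; ring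
    set D := Metric.infDist ξ S with hD
    have hD0 : 0 ≤ D := Metric.infDist_nonneg
    rw [hqξ]
    rcases le_or_gt 0 t with htpos | htneg
    · have hDv : D ≤ dist ξ v := Metric.infDist_le_dist_of_mem hvS
      have h4 : D ^ 4 ≤ (2 - 2 * t) ^ 2 := by
        have h := pow_le_pow_left₀ hD0 hDv 4
        rwa [show dist ξ v ^ 4 = (dist ξ v ^ 2) ^ 2 by ring, hdv ξ hξ] at h
      exact aux_quartic_pos l t D hl2 ht1 htpos h4
    · have hDw : D ≤ dist ξ (-v) := Metric.infDist_le_dist_of_mem hwS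
      have h4 : D ^ 4 ≤ (2 + 2 * t) ^ 2 := by
        have h := pow_le_pow_left₀ hD0 hDw 4
        rwa [show dist ξ (-v) ^ 4 = (dist ξ (-v) ^ 2) ^ 2 by ring, hdw ξ hξ] at h
      exact aux_quartic_neg l t D hl2 ht1 htneg.le h4
  · -- no quadratic bound
    rintro ⟨c, hc, H⟩
    -- S ⊆ {v, -v}
    have hS : ∀ η ∈ S, η = v ∨ η = -v := by
      rintro η ⟨hη, hqη⟩
      have hη' := (norm_one_iff η).1 hη
      set u := v 0 * η 0 + v 1 * η 1 with hudef
      have hu2 : u ^ 2 = 1 := by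
        have h0 : l ^ 2 * (1 - u ^ 2) ^ 2 = 0 := by
          rw [hq η] at hqη
          rw [hudef]
          linear_combination -hqη
        have h1 : (1 - u ^ 2) ^ 2 = 0 := (mul_eq_zero.1 h0).resolve_left (ne_of_gt hl2)
        have h2 : 1 - u ^ 2 = 0 := pow_eq_zero_iff two_ne_zero |>.1 h1
        linarith
      have hcross : v 0 * η 1 - v 1 * η 0 = 0 := by
        have h3 : (v 0 * η 1 - v 1 * η 0) ^ 2 = 0 := by
          rw [hudef] at hu2
          linear_combination (η 0 ^ 2 + η 1 ^ 2) * hv + hη' - hu2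
        exact pow_eq_zero_iff two_ne_zero |>.1 h3
      have he0 : η 0 = v 0 * u := by linear_combination (-(η 0)) * hv - v 1 * hcross
      have he1 : η 1 = v 1 * u := by linear_combination (-(η 1)) * hv + v 0 * hcross
      have : (u - 1) * (u + 1) = 0 := by nlinarith [hu2]
      rcases mul_eq_zero.1 this with h | h
      · left
        have hu1 : u = 1 := by linarith
        ext i
        fin_cases i <;> simp [he0, he1, hu1]
      · right
        have hu1 : u = -1 := by linarith
        ext i
        fin_cases i <;> simp [hwcoord, he0, he1, hu1]
    set δ := min (1/2 : ℝ) (c / (8 * l ^ 2)) with hδdef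
    have hδ0 : 0 < δ := lt_min (by norm_num) (by positivity)
    have hδh : δ ≤ 1/2 := min_le_left _ _
    have hδc : δ ≤ c / (8 * l ^ 2) := min_le_right _ _
    set t := 1 - δ with htdef
    have ht0 : 0 ≤ t := by simp only [htdef]; linarith
    have ht1 : t ≤ 1 := by simp only [htdef]; linarith
    set u := Real.sqrt (1 - t ^ 2) with hudef
    have hu0 : 0 ≤ u := Real.sqrt_nonneg _
    have hu2 : u ^ 2 = 1 - t ^ 2 := Real.sq_sqrt (by nlinarith)
    set ξ : EuclideanSpace ℝ (Fin 2) :=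
      (WithLp.equiv 2 (Fin 2 → ℝ)).symm ![t * v 0 - u * v 1, t * v 1 + u * v 0] with hξdef
    have hξ0 : ξ 0 = t * v 0 - u * v 1 := rfl
    have hξ1 : ξ 1 = t * v 1 + u * v 0 := rfl
    have hξn : ‖ξ‖ = 1 := by
      rw [norm_one_iff, hξ0, hξ1]
      linear_combination (t ^ 2 + u ^ 2) * hv + hu2
    have htξ : v 0 * ξ 0 + v 1 * ξ 1 = t := by
      rw [hξ0, hξ1]; linear_combination t * hv
    have hqξ : l ^ 2 - qcc a ξ = l ^ 2 * (1 - t ^ 2) ^ 2 := by rw [hq ξ, htξ]; ring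
    -- lower bound on infDist
    have hDlow : Real.sqrt (2 - 2 * t) ≤ Metric.infDist ξ S := by
      by_contra hcon
      push_neg at hcon
      obtain ⟨η, hηS, hlt⟩ := (Metric.infDist_lt_iff ⟨v, hvS⟩).1 hcon
      have hb : Real.sqrt (2 - 2 * t) ≤ dist ξ η := by
        rcases hS η hηS with h | h
        · rw [h]
          have hd : dist ξ v = Real.sqrt (2 - 2 * t) := by
            rw [← Real.sqrt_sq dist_nonneg, hdv ξ hξn, htξ]
          rw [hd]
        · rw [h]
          have hd : dist ξ (-v) = Real.sqrt (2 + 2 * t) := by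
            rw [← Real.sqrt_sq dist_nonneg, hdw ξ hξn, htξ]
          rw [hd]
          exact Real.sqrt_le_sqrt (by linarith)
      linarith
    have hD2 : 2 - 2 * t ≤ Metric.infDist ξ S ^ 2 := by
      have := pow_le_pow_left₀ (Real.sqrt_nonneg _) hDlow 2
      rwa [Real.sq_sqrt (by linarith)] at this
    have hH := H ξ hξn
    rw [hqξ] at hH
    have hc2 : c * (2 - 2 * t) ≤ l ^ 2 * (1 - t ^ 2) ^ 2 := by
      calc c * (2 - 2 * t) ≤ c * Metric.infDist ξ S ^ 2 :=
            mul_le_mul_of_nonneg_left hD2 hc.le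
        _ ≤ l ^ 2 * (1 - t ^ 2) ^ 2 := hH
    have h1t2 : 1 - t ^ 2 = δ * (2 - δ) := by rw [htdef]; ring
    rw [h1t2] at hc2
    exact aux_contra l c δ hl2 hc hδ0 hδh hδc (by rw [htdef] at hc2; exact hc2)
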